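/- Let A be an associative unital algebra over ℂ with a comultiplication Δ. If there exist a faithful left integral and a faithful right integral on A, then the four linear maps on A ⊗ A determined by a ⊗ b ↦ Δ(a)(1 ⊗ b), a ⊗ b ↦ Δ(a)(b ⊗ 1), a ⊗ b ↦ (a ⊗ 1)Δ(b), and a ⊗ b ↦ (1 ⊗ a)Δ(b) are all injective. -/

import Mathlib

open TensorProduct

noncomputable section

variable {A : Type*} [Ring A] [Algebra ℂ A]

/-- The slice map `id ⊗ ω : A ⊗ A → A`. -/
def sliceR (ω : A →ₗ[ℂ] ℂ) : A ⊗[ℂ] A →ₗ[ℂ] A :=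
  (TensorProduct.rid ℂ A).toLinearMap ∘ₗ TensorProduct.map LinearMap.id ω

/-- The slice map `ω ⊗ id : A ⊗ A → A`. -/
def sliceL (ω : A →ₗ[ℂ] ℂ) : A ⊗[ℂ] A →ₗ[ℂ] A :=
  (TensorProduct.lid ℂ A).toLinearMap ∘ₗ TensorProduct.map ω LinearMap.id

/-- Coassociativity of a comultiplication `Δ : A → A ⊗ A`:
`(Δ ⊗ id) ∘ Δ = (id ⊗ Δ) ∘ Δ` (up to the associator). -/
def IsCoassoc (Δ : A →ₐ[ℂ] A ⊗[ℂ] A) : Prop :=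
  ∀ a : A,
    TensorProduct.assoc ℂ A A A (TensorProduct.map Δ.toLinearMap LinearMap.id (Δ a)) =
      TensorProduct.map LinearMap.id Δ.toLinearMap (Δ a)

/-- A left integral: a nonzero functional with `(id ⊗ φ)(Δ a) = φ(a)·1` for all `a`. -/
def IsLeftIntegral (Δ : A →ₐ[ℂ] A ⊗[ℂ] A) (φ : A →ₗ[ℂ] ℂ) : Prop :=
  φ ≠ 0 ∧ ∀ a : A, sliceR φ (Δ a) = φ a • (1 : A)

/-- A right integral: a nonzero functional with `(ψ ⊗ id)(Δ a) = ψ(a)·1` for all `a`. -/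
def IsRightIntegral (Δ : A →ₐ[ℂ] A ⊗[ℂ] A) (ψ : A →ₗ[ℂ] ℂ) : Prop :=
  ψ ≠ 0 ∧ ∀ a : A, sliceL ψ (Δ a) = ψ a • (1 : A)

/-- A faithful functional: the bilinear form `(a, b) ↦ ω(ab)` is non-degenerate. -/
def IsFaithful (ω : A →ₗ[ℂ] ℂ) : Prop :=
  (∀ b : A, (∀ a : A, ω (a * b) = 0) → b = 0) ∧
  (∀ b : A, (∀ a : A, ω (b * a) = 0) → b = 0)

/-- The left leg of an element `x ∈ A ⊗ A`: the span of `{(id ⊗ ω)(x) : ω ∈ A*}`. -/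
def leftLegOf (x : A ⊗[ℂ] A) : Submodule ℂ A :=
  Submodule.span ℂ {y : A | ∃ ω : A →ₗ[ℂ] ℂ, y = sliceR ω x}

/-- The right leg of an element `x ∈ A ⊗ A`: the span of `{(ω ⊗ id)(x) : ω ∈ A*}`. -/
def rightLegOf (x : A ⊗[ℂ] A) : Submodule ℂ A :=
  Submodule.span ℂ {y : A | ∃ ω : A →ₗ[ℂ] ℂ, y = sliceL ω x}

/-- The left leg of `Δ`: the span of `{(id ⊗ ω)(Δ a) : a ∈ A, ω ∈ A*}`. -/
def leftLeg (Δ : A →ₐ[ℂ] A ⊗[ℂ] A) : Submodule ℂ A :=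
  Submodule.span ℂ {y : A | ∃ (a : A) (ω : A →ₗ[ℂ] ℂ), y = sliceR ω (Δ a)}

/-- The right leg of `Δ`: the span of `{(ω ⊗ id)(Δ a) : a ∈ A, ω ∈ A*}`. -/
def rightLeg (Δ : A →ₐ[ℂ] A ⊗[ℂ] A) : Submodule ℂ A :=
  Submodule.span ℂ {y : A | ∃ (a : A) (ω : A →ₗ[ℂ] ℂ), y = sliceL ω (Δ a)}

/-- A comultiplication is full if both of its legs are all of `A`. -/
def IsFull (Δ : A →ₐ[ℂ] A ⊗[ℂ] A) : Prop :=
  leftLeg Δ = ⊤ ∧ rightLeg Δ = ⊤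

/-- The linear map `T₁` with `T₁ (a ⊗ b) = Δ(a) * (1 ⊗ b)`. -/
def T1 (Δ : A →ₐ[ℂ] A ⊗[ℂ] A) : A ⊗[ℂ] A →ₗ[ℂ] A ⊗[ℂ] A :=
  LinearMap.mul' ℂ (A ⊗[ℂ] A) ∘ₗ
    TensorProduct.map Δ.toLinearMap (TensorProduct.mk ℂ A A 1)

/-- The linear map `T₁'` with `T₁' (a ⊗ b) = Δ(a) * (b ⊗ 1)`. -/
def T1' (Δ : A →ₐ[ℂ] A ⊗[ℂ] A) : A ⊗[ℂ] A →ₗ[ℂ] A ⊗[ℂ] A :=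
  LinearMap.mul' ℂ (A ⊗[ℂ] A) ∘ₗ
    TensorProduct.map Δ.toLinearMap ((TensorProduct.mk ℂ A A).flip 1)

/-- The linear map `T₂` with `T₂ (a ⊗ b) = (a ⊗ 1) * Δ(b)`. -/
def T2 (Δ : A →ₐ[ℂ] A ⊗[ℂ] A) : A ⊗[ℂ] A →ₗ[ℂ] A ⊗[ℂ] A :=
  LinearMap.mul' ℂ (A ⊗[ℂ] A) ∘ₗ
    TensorProduct.map ((TensorProduct.mk ℂ A A).flip 1) Δ.toLinearMap

/-- The linear map `T₂'` with `T₂' (a ⊗ b) = (1 ⊗ a) * Δ(b)`. -/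
def T2' (Δ : A →ₐ[ℂ] A ⊗[ℂ] A) : A ⊗[ℂ] A →ₗ[ℂ] A ⊗[ℂ] A :=
  LinearMap.mul' ℂ (A ⊗[ℂ] A) ∘ₗ
    TensorProduct.map (TensorProduct.mk ℂ A A 1) Δ.toLinearMap

/-- A left cointegral: a nonzero element `h` with `Δ(a)(1 ⊗ h) = a ⊗ h` for all `a`. -/
def IsLeftCointegral (Δ : A →ₐ[ℂ] A ⊗[ℂ] A) (h : A) : Prop :=
  h ≠ 0 ∧ ∀ a : A, Δ a * ((1 : A) ⊗ₜ[ℂ] h) = a ⊗ₜ[ℂ] h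

/-- A right cointegral: a nonzero element `k` with `(k ⊗ 1)Δ(a) = k ⊗ a` for all `a`. -/
def IsRightCointegral (Δ : A →ₐ[ℂ] A ⊗[ℂ] A) (k : A) : Prop :=
  k ≠ 0 ∧ ∀ a : A, (k ⊗ₜ[ℂ] (1 : A)) * Δ a = k ⊗ₜ[ℂ] a

/-- `Δ₁₃(a) = (1 ⊗ σ)(Δ(a) ⊗ 1)`, viewed in `A ⊗ (A ⊗ A)`. -/
def delta13 (Δ : A →ₐ[ℂ] A ⊗[ℂ] A) (a : A) : A ⊗[ℂ] (A ⊗[ℂ] A) :=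
  TensorProduct.map LinearMap.id (TensorProduct.comm ℂ A A).toLinearMap
    (TensorProduct.assoc ℂ A A A (Δ a ⊗ₜ[ℂ] (1 : A)))

section Aux

variable {A : Type*} [Ring A] [Algebra ℂ A]

lemma sliceL_tmul (f : A →ₗ[ℂ] ℂ) (a b : A) : sliceL f (a ⊗ₜ[ℂ] b) = f a • b := by
  simp [sliceL]

lemma sliceR_tmul (f : A →ₗ[ℂ] ℂ) (a b : A) : sliceR f (a ⊗ₜ[ℂ] b) = f b • a := by
  simp [sliceR]

lemma sliceL_mul_oneTmul (f : A →ₗ[ℂ] ℂ) (y : A ⊗[ℂ] A) (b : A) :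
    sliceL f (y * ((1 : A) ⊗ₜ[ℂ] b)) = sliceL f y * b := by
  induction y using TensorProduct.induction_on with
  | zero => simp
  | tmul p q => simp [Algebra.TensorProduct.tmul_mul_tmul, sliceL_tmul, smul_mul_assoc]
  | add u v hu hv => simp [add_mul, hu, hv]

lemma sliceL_oneTmul_mul (f : A →ₗ[ℂ] ℂ) (a : A) (y : A ⊗[ℂ] A) :
    sliceL f (((1 : A) ⊗ₜ[ℂ] a) * y) = a * sliceL f y := by
  induction y using TensorProduct.induction_on with
  | zero => simp
  | tmul p q => simp [Algebra.TensorProduct.tmul_mul_tmul, sliceL_tmul, mul_smul_comm]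
  | add u v hu hv => simp [mul_add, hu, hv]

lemma sliceR_mul_tmulOne (f : A →ₗ[ℂ] ℂ) (y : A ⊗[ℂ] A) (b : A) :
    sliceR f (y * (b ⊗ₜ[ℂ] (1 : A))) = sliceR f y * b := by
  induction y using TensorProduct.induction_on with
  | zero => simp
  | tmul p q => simp [Algebra.TensorProduct.tmul_mul_tmul, sliceR_tmul, smul_mul_assoc]
  | add u v hu hv => simp [add_mul, hu, hv]

lemma sliceR_tmulOne_mul (f : A →ₗ[ℂ] ℂ) (a : A) (y : A ⊗[ℂ] A) :
    sliceR f ((a ⊗ₜ[ℂ] (1 : A)) * y) = a * sliceR f y := by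
  induction y using TensorProduct.induction_on with
  | zero => simp
  | tmul p q => simp [Algebra.TensorProduct.tmul_mul_tmul, sliceR_tmul, mul_smul_comm]
  | add u v hu hv => simp [mul_add, hu, hv]

lemma eq_zero_of_sliceR (x : A ⊗[ℂ] A) (h : ∀ g : A →ₗ[ℂ] ℂ, sliceR g x = 0) : x = 0 := by
  classical
  let b := Module.Basis.ofVectorSpace ℂ A
  let bT := b.tensorProduct b
  have key : ∀ (i j : _) (y : A ⊗[ℂ] A),
      bT.repr y (i, j) = b.repr (sliceR (b.coord j) y) i := by
    intro i j y
    induction y using TensorProduct.induction_on with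
    | zero => simp
    | tmul p q =>
      simp [bT, sliceR_tmul, Module.Basis.coord_apply, map_smul, smul_eq_mul]
    | add u v hu hv => simp [map_add, hu, hv]
  have hrepr : bT.repr x = 0 := by
    ext ij
    obtain ⟨i, j⟩ := ij
    rw [key i j x, h (b.coord j)]
    simp
  simpa using congrArg bT.repr.symm hrepr

lemma eq_zero_of_sliceL (x : A ⊗[ℂ] A) (h : ∀ f : A →ₗ[ℂ] ℂ, sliceL f x = 0) : x = 0 := by
  classical
  let b := Module.Basis.ofVectorSpace ℂ A
  let bT := b.tensorProduct b
  have key : ∀ (i j : _) (y : A ⊗[ℂ] A),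
      bT.repr y (i, j) = b.repr (sliceL (b.coord i) y) j := by
    intro i j y
    induction y using TensorProduct.induction_on with
    | zero => simp
    | tmul p q =>
      simp [bT, sliceL_tmul, Module.Basis.coord_apply, map_smul, smul_eq_mul, mul_comm]
    | add u v hu hv => simp [map_add, hu, hv]
  have hrepr : bT.repr x = 0 := by
    ext ij
    obtain ⟨i, j⟩ := ij
    rw [key i j x, h (b.coord i)]
    simp
  simpa using congrArg bT.repr.symm hrepr

lemma sep_left (ω : A →ₗ[ℂ] ℂ) (hω : ∀ b : A, (∀ a : A, ω (a * b) = 0) → b = 0)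
    (x : A ⊗[ℂ] A) (hx : ∀ c : A, sliceL (ω ∘ₗ LinearMap.mulLeft ℂ c) x = 0) : x = 0 := by
  refine eq_zero_of_sliceR x fun g => ?_
  refine hω _ fun c => ?_
  have key : ∀ y : A ⊗[ℂ] A,
      ω (c * sliceR g y) = g (sliceL (ω ∘ₗ LinearMap.mulLeft ℂ c) y) := by
    intro y
    induction y using TensorProduct.induction_on with
    | zero => simp
    | tmul p q =>
      simp [sliceR_tmul, sliceL_tmul, mul_smul_comm, smul_eq_mul]
      ring
    | add u v hu hv => simp [mul_add, map_add, hu, hv]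
  rw [key x, hx c, map_zero]

lemma sep_right (ω : A →ₗ[ℂ] ℂ) (hω : ∀ b : A, (∀ a : A, ω (b * a) = 0) → b = 0)
    (x : A ⊗[ℂ] A) (hx : ∀ c : A, sliceR (ω ∘ₗ LinearMap.mulRight ℂ c) x = 0) : x = 0 := by
  refine eq_zero_of_sliceL x fun f => ?_
  refine hω _ fun c => ?_
  have key : ∀ y : A ⊗[ℂ] A,
      ω (sliceL f y * c) = f (sliceR (ω ∘ₗ LinearMap.mulRight ℂ c) y) := by
    intro y
    induction y using TensorProduct.induction_on with
    | zero => simp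
    | tmul p q =>
      simp [sliceR_tmul, sliceL_tmul, smul_mul_assoc, smul_eq_mul]
      ring
    | add u v hu hv => simp [add_mul, map_add, hu, hv]
  rw [key x, hx c, map_zero]

lemma T1_tmul (Δ : A →ₐ[ℂ] A ⊗[ℂ] A) (a b : A) :
    T1 Δ (a ⊗ₜ[ℂ] b) = Δ a * ((1 : A) ⊗ₜ[ℂ] b) := by
  simp [T1, LinearMap.mul'_apply]

lemma T1'_tmul (Δ : A →ₐ[ℂ] A ⊗[ℂ] A) (a b : A) :
    T1' Δ (a ⊗ₜ[ℂ] b) = Δ a * (b ⊗ₜ[ℂ] (1 : A)) := by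
  simp [T1', LinearMap.mul'_apply]

lemma T2_tmul (Δ : A →ₐ[ℂ] A ⊗[ℂ] A) (a b : A) :
    T2 Δ (a ⊗ₜ[ℂ] b) = (a ⊗ₜ[ℂ] (1 : A)) * Δ b := by
  simp [T2, LinearMap.mul'_apply]

lemma T2'_tmul (Δ : A →ₐ[ℂ] A ⊗[ℂ] A) (a b : A) :
    T2' Δ (a ⊗ₜ[ℂ] b) = ((1 : A) ⊗ₜ[ℂ] a) * Δ b := by
  simp [T2', LinearMap.mul'_apply]

lemma injective_of_ker {f : A ⊗[ℂ] A →ₗ[ℂ] A ⊗[ℂ] A}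
    (h : ∀ x, f x = 0 → x = 0) : Function.Injective f := by
  intro u v huv
  have : f (u - v) = 0 := by rw [map_sub, huv, sub_self]
  exact sub_eq_zero.mp (h _ this)

end Aux

/-- If there are a faithful left integral and a faithful right integral, the four maps
`a ⊗ b ↦ Δ(a)(1 ⊗ b)`, `a ⊗ b ↦ Δ(a)(b ⊗ 1)`, `a ⊗ b ↦ (a ⊗ 1)Δ(b)`, `a ⊗ b ↦ (1 ⊗ a)Δ(b)`
are all injective. -/
theorem four_canonical_maps_injective
    (Δ : A →ₐ[ℂ] A ⊗[ℂ] A) (hΔ : IsCoassoc Δ)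
    (φ : A →ₗ[ℂ] ℂ) (hφ : IsLeftIntegral Δ φ) (hφf : IsFaithful φ)
    (ψ : A →ₗ[ℂ] ℂ) (hψ : IsRightIntegral Δ ψ) (hψf : IsFaithful ψ) :
    Function.Injective (T1 Δ) ∧ Function.Injective (T1' Δ) ∧
      Function.Injective (T2 Δ) ∧ Function.Injective (T2' Δ) := by
  refine ⟨?_, ?_, ?_, ?_⟩
  · -- T1
    refine injective_of_ker fun x hx => ?_
    refine sep_left ψ hψf.1 x fun c => ?_
    have key : ∀ y : A ⊗[ℂ] A,
        sliceL ψ (Δ c * T1 Δ y) = sliceL (ψ ∘ₗ LinearMap.mulLeft ℂ c) y := by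
      intro y
      induction y using TensorProduct.induction_on with
      | zero => simp
      | tmul a b =>
        rw [T1_tmul, ← mul_assoc, ← map_mul, sliceL_mul_oneTmul, hψ.2, sliceL_tmul,
          smul_mul_assoc, one_mul]
        rfl
      | add u v hu hv => simp [map_add, mul_add, hu, hv]
    rw [← key x, hx, mul_zero, map_zero]
  · -- T1'
    refine injective_of_ker fun x hx => ?_
    refine sep_left φ hφf.1 x fun c => ?_
    have key : ∀ y : A ⊗[ℂ] A,
        sliceR φ (Δ c * T1' Δ y) = sliceL (φ ∘ₗ LinearMap.mulLeft ℂ c) y := by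
      intro y
      induction y using TensorProduct.induction_on with
      | zero => simp
      | tmul a b =>
        rw [T1'_tmul, ← mul_assoc, ← map_mul, sliceR_mul_tmulOne, hφ.2, sliceL_tmul,
          smul_mul_assoc, one_mul]
        rfl
      | add u v hu hv => simp [map_add, mul_add, hu, hv]
    rw [← key x, hx, mul_zero, map_zero]
  · -- T2
    refine injective_of_ker fun x hx => ?_
    refine sep_right φ hφf.2 x fun c => ?_
    have key : ∀ y : A ⊗[ℂ] A,
        sliceR φ (T2 Δ y * Δ c) = sliceR (φ ∘ₗ LinearMap.mulRight ℂ c) y := by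
      intro y
      induction y using TensorProduct.induction_on with
      | zero => simp
      | tmul a b =>
        rw [T2_tmul, mul_assoc, ← map_mul, sliceR_tmulOne_mul, hφ.2, sliceR_tmul,
          mul_smul_comm, mul_one]
        rfl
      | add u v hu hv => simp [map_add, add_mul, hu, hv]
    rw [← key x, hx, zero_mul, map_zero]
  · -- T2'
    refine injective_of_ker fun x hx => ?_
    refine sep_right ψ hψf.2 x fun c => ?_
    have key : ∀ y : A ⊗[ℂ] A,
        sliceL ψ (T2' Δ y * Δ c) = sliceR (ψ ∘ₗ LinearMap.mulRight ℂ c) y := by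
      intro y
      induction y using TensorProduct.induction_on with
      | zero => simp
      | tmul a b =>
        rw [T2'_tmul, mul_assoc, ← map_mul, sliceL_oneTmul_mul, hψ.2, sliceR_tmul,
          mul_smul_comm, mul_one]
        rfl
      | add u v hu hv => simp [map_add, add_mul, hu, hv]
    rw [← key x, hx, zero_mul, map_zero]
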